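/- Let A, B be real symmetric n×n matrices with A nonsingular and not SDC. If there is a nonzero real eigenvalue λ of A⁻¹B such that A + (-1/λ)B ⪰ 0, then {μ ∈ ℝ : A + μB ⪰ 0} = {-1/λ}. -/

import Mathlib

open Matrix

open scoped MatrixOrder in
/-- If the pencil contains two distinct PSD members and `A` is nonsingular,
then `A` and `B` are simultaneously diagonalizable by congruence. -/
lemma aux_sdc_of_two_psd {n : ℕ} (A B : Matrix (Fin n) (Fin n) ℝ)
    (hAinv : IsUnit A.det) (hBs : Bᵀ = B) {μ₁ μ₂ : ℝ} (hne : μ₁ ≠ μ₂)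
    (h1 : (A + μ₁ • B).PosSemidef) (h2 : (A + μ₂ • B).PosSemidef) :
    ∃ P : Matrix (Fin n) (Fin n) ℝ, IsUnit P.det ∧
      (Pᵀ * A * P).IsDiag ∧ (Pᵀ * B * P).IsDiag := by
  set C₁ := A + μ₁ • B with hC₁
  set C₂ := A + μ₂ • B with hC₂
  set D := C₁ + C₂ with hDdef
  have hD : D.PosSemidef := h1.add h2
  -- D is invertible
  have hDdet : D.det ≠ 0 := by
    intro h0
    obtain ⟨x, hx, hDx⟩ := Matrix.exists_mulVec_eq_zero_iff.mpr h0
    have hq : x ⬝ᵥ C₁ *ᵥ x + x ⬝ᵥ C₂ *ᵥ x = 0 := by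
      have := congrArg (fun y => x ⬝ᵥ y) hDx
      simpa [hDdef, add_mulVec, dotProduct_add] using this
    have hq1 : (0:ℝ) ≤ x ⬝ᵥ C₁ *ᵥ x := by simpa using h1.dotProduct_mulVec_nonneg x
    have hq2 : (0:ℝ) ≤ x ⬝ᵥ C₂ *ᵥ x := by simpa using h2.dotProduct_mulVec_nonneg x
    have e1 : x ⬝ᵥ C₁ *ᵥ x = 0 := by linarith
    have e2 : x ⬝ᵥ C₂ *ᵥ x = 0 := by linarith
    have hC1x : C₁ *ᵥ x = 0 := (h1.dotProduct_mulVec_zero_iff x).mp (by simpa using e1)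
    have hC2x : C₂ *ᵥ x = 0 := (h2.dotProduct_mulVec_zero_iff x).mp (by simpa using e2)
    have hBx : B *ᵥ x = 0 := by
      have hsub : (μ₂ - μ₁) • (B *ᵥ x) = 0 := by
        have := congrArg₂ (fun a b => a - b) hC2x hC1x
        simpa [hC₁, hC₂, add_mulVec, smul_mulVec, sub_smul] using this
      have hμ : μ₂ - μ₁ ≠ 0 := sub_ne_zero.mpr hne.symm
      simpa [hμ] using smul_eq_zero.mp hsub
    have hAx : A *ᵥ x = 0 := by
      have := hC1x
      simpa [hC₁, add_mulVec, smul_mulVec, hBx] using this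
    have : x = 0 := by
      have := congrArg (fun y => A⁻¹ *ᵥ y) hAx
      simpa [mulVec_mulVec, Matrix.nonsing_inv_mul A hAinv] using this
    exact hx this
  -- square root of D
  set S := CFC.sqrt D with hSdef
  have hSS : S * S = D := CFC.sqrt_mul_sqrt_self D hD.nonneg
  have hSdet : S.det ≠ 0 := by
    intro h0
    apply hDdet
    rw [← hSS, det_mul, h0, mul_zero]
  have hSunit : IsUnit S.det := isUnit_iff_ne_zero.mpr hSdet
  have hSsymm : Sᵀ = S := by
    have := (CFC.sqrt_nonneg D).posSemidef.1
    rwa [Matrix.IsHermitian, conjTranspose_eq_transpose_of_trivial] at this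
  set E := S⁻¹ with hEdef
  have hEsymm : Eᵀ = E := by rw [hEdef, Matrix.transpose_nonsing_inv, hSsymm]
  have hES : E * S = 1 := Matrix.nonsing_inv_mul S hSunit
  have hSE : S * E = 1 := Matrix.mul_nonsing_inv S hSunit
  have hEDE : E * D * E = 1 := by
    rw [← hSS, show E * (S * S) * E = (E * S) * (S * E) by noncomm_ring, hES, hSE, one_mul]
  have hEdet : IsUnit E.det := by
    apply IsUnit.of_mul_eq_one S.det
    rw [← det_mul, hES, det_one]
  -- diagonalize E * B * E
  set M := E * B * E with hMdef
  have hMherm : M.IsHermitian := by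
    rw [Matrix.IsHermitian, conjTranspose_eq_transpose_of_trivial, hMdef]
    simp [Matrix.transpose_mul, hEsymm, hBs, Matrix.mul_assoc]
  set U : Matrix (Fin n) (Fin n) ℝ := (hMherm.eigenvectorUnitary : Matrix (Fin n) (Fin n) ℝ)
    with hUdef
  have hUstar : star U * U = 1 := Unitary.coe_star_mul_self _
  have hUstar' : U * star U = 1 := Unitary.coe_mul_star_self _
  have hUdet : IsUnit U.det := by
    apply IsUnit.of_mul_eq_one (star U).det
    rw [← det_mul, hUstar', det_one]
  have hUT : Uᵀ = star U := by
    rw [Matrix.star_eq_conjTranspose, conjTranspose_eq_transpose_of_trivial]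
  have hPD : (E * U)ᵀ * D * (E * U) = 1 := by
    rw [Matrix.transpose_mul, hEsymm, hUT,
      show star U * E * D * (E * U) = star U * (E * D * E) * U by noncomm_ring,
      hEDE, Matrix.mul_one, hUstar]
  have hPB : (E * U)ᵀ * B * (E * U) = diagonal (RCLike.ofReal ∘ hMherm.eigenvalues) := by
    rw [Matrix.transpose_mul, hEsymm, hUT,
      show star U * E * B * (E * U) = star U * (E * B * E) * U by noncomm_ring,
      ← hMdef]
    exact (Unitary.conjStarAlgAut_star_apply (S := ℝ) _ _).symm.trans
      hMherm.conjStarAlgAut_star_eigenvectorUnitary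
  refine ⟨E * U, ?_, ?_, ?_⟩
  · rw [det_mul]; exact hEdet.mul hUdet
  · have hA_eq : A = (2⁻¹ : ℝ) • D - ((μ₁ + μ₂)/2) • B := by
      rw [hDdef, hC₁, hC₂]; module
    rw [hA_eq]
    have hdist : (E * U)ᵀ * ((2⁻¹ : ℝ) • D - ((μ₁ + μ₂)/2) • B) * (E * U)
        = (2⁻¹ : ℝ) • ((E * U)ᵀ * D * (E * U)) - ((μ₁ + μ₂)/2) • ((E * U)ᵀ * B * (E * U)) := by
      simp [Matrix.mul_sub, Matrix.sub_mul, Matrix.mul_smul, Matrix.smul_mul]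
    rw [hdist, hPD, hPB]
    exact (Matrix.isDiag_one.smul _).sub ((Matrix.isDiag_diagonal _).smul _)
  · rw [hPB]; exact Matrix.isDiag_diagonal _

theorem not_sdc_psd_set_eq_singleton {n : ℕ}
    (A B : Matrix (Fin n) (Fin n) ℝ) (hA : A.IsSymm) (hB : B.IsSymm)
    (hAinv : IsUnit A.det)
    (hnsdc : ¬ ∃ P : Matrix (Fin n) (Fin n) ℝ, IsUnit P.det ∧
      (Pᵀ * A * P).IsDiag ∧ (Pᵀ * B * P).IsDiag)
    (l : ℝ) (hl : l ≠ 0)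
    (heig : ∃ v : Fin n → ℝ, v ≠ 0 ∧ (A⁻¹ * B) *ᵥ v = l • v)
    (hpsd : (A + (-(1 / l)) • B).PosSemidef) :
    {μ : ℝ | (A + μ • B).PosSemidef} = {-(1 / l)} := by
  ext μ
  simp only [Set.mem_setOf_eq, Set.mem_singleton_iff]
  constructor
  · intro h
    by_contra hne
    exact hnsdc (aux_sdc_of_two_psd A B hAinv hB hne h hpsd)
  · rintro rfl
    exact hpsd
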